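/- Fix c ∈ ℂ with |c| > 1 and r = √(|c|² - 1), and let τ be the one-way reflection as above. Then τ is 1-Lipschitz on the unit circle: |τ(x) - τ(y)| ≤ |x - y| for all x, y with |x| = |y| = 1. -/

import Mathlib

/-- The one-way reflection in the hyperbolic line `{z : |z - c| = r}` of the Poincaré disk,
where `r = √(|c|² - 1)`, extended to the boundary circle. -/
noncomputable def oneWayReflection (c : ℂ) (z : ℂ) : ℂ :=
  if Real.sqrt (‖c‖ ^ 2 - 1) < ‖z - c‖ then
    ((‖c‖ ^ 2 - 1 : ℝ) : ℂ) / (starRingEnd ℂ z - starRingEnd ℂ c) + c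
  else z

private lemma key_ineq (K A B t : ℝ) (hK : 0 ≤ K) (hA : K < A) (hB : B ≤ K)
    (ht : 2*t ≤ A + B) : (K/A)^2*A + B - 2*((K/A)*t) ≤ A + B - 2*t := by
  have hA0 : 0 < A := lt_of_le_of_lt hK hA
  have h1 : (K/A)^2*A + B - 2*((K/A)*t) = (K^2 - 2*K*t)/A + B := by
    field_simp; ring
  rw [h1]
  have h2 : (K^2 - 2*K*t)/A ≤ A - 2*t := by
    rw [div_le_iff₀ hA0]
    nlinarith [mul_nonneg (sub_nonneg.2 hA.le) (show (0:ℝ) ≤ A + K - 2*t by nlinarith)]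
  linarith

private lemma abs_scaled_sub_le (a b : ℂ) (K : ℝ) (hK : 0 ≤ K)
    (hKA : K < Complex.normSq a) (hBK : Complex.normSq b ≤ K) :
    ‖((K / Complex.normSq a : ℝ) : ℂ) * a - b‖ ≤ ‖a - b‖ := by
  rw [Complex.norm_def, Complex.norm_def]
  apply Real.sqrt_le_sqrt
  rw [Complex.normSq_sub, Complex.normSq_sub, Complex.normSq_mul, Complex.normSq_ofReal,
    mul_assoc ((K / Complex.normSq a : ℝ) : ℂ), Complex.re_ofReal_mul]
  have ht : 2 * (a * (starRingEnd ℂ) b).re ≤ Complex.normSq a + Complex.normSq b := by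
    have h3 : (a * (starRingEnd ℂ) b).re ≤ ‖a‖ * ‖b‖ := by
      calc (a * (starRingEnd ℂ) b).re ≤ ‖a * (starRingEnd ℂ) b‖ :=
            Complex.re_le_norm _
        _ = ‖a‖ * ‖b‖ := by rw [norm_mul, Complex.norm_conj]
    rw [Complex.normSq_eq_norm_sq, Complex.normSq_eq_norm_sq]
    nlinarith [sq_nonneg (‖a‖ - ‖b‖)]
  have := key_ineq K (Complex.normSq a) (Complex.normSq b) ((a * (starRingEnd ℂ) b).re)
    hK hKA hBK ht
  linarith

private lemma mixed_case (c x y : ℂ) (hc : 1 < ‖c‖)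
    (h1 : Real.sqrt (‖c‖ ^ 2 - 1) < ‖x - c‖)
    (h2 : ‖y - c‖ ≤ Real.sqrt (‖c‖ ^ 2 - 1)) :
    ‖((‖c‖ ^ 2 - 1 : ℝ) : ℂ) / (starRingEnd ℂ x - starRingEnd ℂ c) + c - y‖
      ≤ ‖x - y‖ := by
  have hK : (0:ℝ) < ‖c‖ ^ 2 - 1 := by nlinarith
  have hKA : ‖c‖ ^ 2 - 1 < Complex.normSq (x - c) := by
    rw [Complex.normSq_eq_norm_sq, ← Real.sq_sqrt hK.le]
    exact pow_lt_pow_left₀ h1 (Real.sqrt_nonneg _) (by norm_num)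
  have hBK : Complex.normSq (y - c) ≤ ‖c‖ ^ 2 - 1 := by
    rw [Complex.normSq_eq_norm_sq, ← Real.sq_sqrt hK.le]
    exact pow_le_pow_left₀ (norm_nonneg _) h2 2
  have ha0 : x - c ≠ 0 := by
    intro h
    rw [h, norm_zero] at h1
    exact absurd h1 (not_lt.2 (Real.sqrt_nonneg _))
  have hA0 : Complex.normSq (x - c) ≠ 0 := (Complex.normSq_pos.2 ha0).ne'
  have hca : (starRingEnd ℂ) (x - c) ≠ 0 := (map_ne_zero _).2 ha0
  have hconj : starRingEnd ℂ x - starRingEnd ℂ c = starRingEnd ℂ (x - c) := (map_sub _ _ _).symm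
  have hu : ((‖c‖ ^ 2 - 1 : ℝ):ℂ) / (starRingEnd ℂ (x - c))
      = (((‖c‖ ^ 2 - 1) / Complex.normSq (x - c) : ℝ):ℂ) * (x - c) := by
    rw [div_eq_iff hca, mul_assoc, Complex.mul_conj, Complex.ofReal_div, div_mul_eq_mul_div,
      mul_div_assoc, div_self (Complex.ofReal_ne_zero.2 hA0), mul_one]
  have hexpr : ((‖c‖ ^ 2 - 1 : ℝ):ℂ) / (starRingEnd ℂ x - starRingEnd ℂ c) + c - y
      = (((‖c‖ ^ 2 - 1) / Complex.normSq (x - c) : ℝ):ℂ) * (x - c) - (y - c) := by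
    rw [hconj, hu]; ring
  have hxy : x - y = (x - c) - (y - c) := by ring
  rw [hexpr, hxy]
  exact abs_scaled_sub_le (x - c) (y - c) _ hK.le hKA hBK

theorem oneWayReflection_lipschitz (c : ℂ) (hc : 1 < ‖c‖) (x y : ℂ)
    (hx : ‖x‖ = 1) (hy : ‖y‖ = 1) :
    ‖oneWayReflection c x - oneWayReflection c y‖ ≤ ‖x - y‖ := by
  unfold oneWayReflection
  have hK : (0:ℝ) < ‖c‖ ^ 2 - 1 := by nlinarith
  split_ifs with h1 h2 h2
  · -- both outside
    have hsk : (0:ℝ) < Real.sqrt (‖c‖ ^ 2 - 1) := Real.sqrt_pos.2 hK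
    have ha : (0:ℝ) < ‖x - c‖ := lt_trans hsk h1
    have hb : (0:ℝ) < ‖y - c‖ := lt_trans hsk h2
    have ha0 : x - c ≠ 0 := norm_ne_zero_iff.1 ha.ne'
    have hb0 : y - c ≠ 0 := norm_ne_zero_iff.1 hb.ne'
    have hca : (starRingEnd ℂ) x - (starRingEnd ℂ) c ≠ 0 := by
      rw [← map_sub]; exact (map_ne_zero _).2 ha0
    have hcb : (starRingEnd ℂ) y - (starRingEnd ℂ) c ≠ 0 := by
      rw [← map_sub]; exact (map_ne_zero _).2 hb0
    have heq : ((‖c‖ ^ 2 - 1 : ℝ):ℂ) / (starRingEnd ℂ x - starRingEnd ℂ c) + c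
        - (((‖c‖ ^ 2 - 1 : ℝ):ℂ) / (starRingEnd ℂ y - starRingEnd ℂ c) + c)
        = ((‖c‖ ^ 2 - 1 : ℝ):ℂ) * (starRingEnd ℂ) ((y - c) - (x - c))
          / ((starRingEnd ℂ) (x - c) * (starRingEnd ℂ) (y - c)) := by
      rw [map_sub, map_sub, map_sub]
      field_simp
      ring
    rw [heq, norm_div, norm_mul, norm_mul, Complex.norm_conj, Complex.norm_conj,
      Complex.norm_conj, Complex.norm_real, Real.norm_eq_abs, abs_of_pos hK]
    have hba : ‖(y - c) - (x - c)‖ = ‖x - y‖ := by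
      rw [show (y - c) - (x - c) = -(x - y) by ring, norm_neg]
    rw [hba, div_le_iff₀ (by positivity)]
    have hKab : ‖c‖ ^ 2 - 1 < ‖x - c‖ * ‖y - c‖ := by
      have := mul_lt_mul'' h1 h2 (Real.sqrt_nonneg _) (Real.sqrt_nonneg _)
      rwa [Real.mul_self_sqrt hK.le] at this
    nlinarith [norm_nonneg (x - y)]
  · exact mixed_case c x y hc h1 (not_lt.1 h2)
  · rw [norm_sub_rev, norm_sub_rev x y]
    exact mixed_case c y x hc h2 (not_lt.1 h1)
  · exact le_refl _
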